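/- For every integer n ≥ 2, the sum ∑ C_{r_1}·C_{r_2}·C_{r_3}·C_{r_4} over all quadruples (r_1,r_2,r_3,r_4) of nonnegative integers with r_1 ≥ 1, r_4 ≥ 1, r_2, r_3 ≥ 0 and r_1 + r_2 + r_3 + r_4 = n − 2 equals C_{n+1} − 4·C_n + 3·C_{n−1}. -/

import Mathlib

open Finset Finset.Nat

private lemma tuple_split (k m : ℕ) (F : (Fin (k+1) → ℕ) → ℤ) :
    ∑ x ∈ antidiagonalTuple (k+1) m, F x
      = ∑ p ∈ antidiagonal m, ∑ x ∈ antidiagonalTuple k p.2, F (Fin.cons p.1 x) := by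
  rw [Finset.sum_sigma']
  refine Finset.sum_nbij' (j := fun x => Fin.cons x.1.1 x.2)
    (i := fun x => ⟨(x 0, ∑ i : Fin k, x i.succ), fun i : Fin k => x i.succ⟩) ?_ ?_ ?_ ?_ ?_
  · intro x h
    simp only [mem_antidiagonalTuple, Finset.mem_sigma, HasAntidiagonal.mem_antidiagonal] at h ⊢
    rw [Fin.sum_univ_succ] at h
    exact ⟨h, trivial⟩
  · rintro ⟨⟨a, b⟩, x⟩ h
    simp only [Finset.mem_sigma, HasAntidiagonal.mem_antidiagonal, mem_antidiagonalTuple] at h ⊢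
    rw [Fin.sum_cons]
    omega
  · intro x h
    exact Fin.cons_self_tail x
  · rintro ⟨⟨a, b⟩, x⟩ h
    simp only [Finset.mem_sigma, HasAntidiagonal.mem_antidiagonal, mem_antidiagonalTuple] at h
    simp only [Fin.cons_zero, Fin.cons_succ]
    obtain ⟨h1, h2⟩ := h
    subst h2
    rfl
  · intro x h
    simp only [Fin.cons_zero, Fin.cons_succ]
    exact congrArg F ((Fin.cons_self_tail x).symm)

private lemma split4 (m : ℕ) (F : (Fin 4 → ℕ) → ℤ) :
    ∑ x ∈ antidiagonalTuple 4 m, F x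
      = ∑ p ∈ antidiagonal m, ∑ x ∈ antidiagonalTuple 3 p.2, F (Fin.cons p.1 x) :=
  tuple_split 3 m F

private lemma split3 (m : ℕ) (F : (Fin 3 → ℕ) → ℤ) :
    ∑ x ∈ antidiagonalTuple 3 m, F x
      = ∑ p ∈ antidiagonal m, ∑ x ∈ antidiagonalTuple 2 p.2, F (Fin.cons p.1 x) :=
  tuple_split 2 m F

private lemma split2 (m : ℕ) (F : (Fin 2 → ℕ) → ℤ) :
    ∑ x ∈ antidiagonalTuple 2 m, F x
      = ∑ p ∈ antidiagonal m, ∑ x ∈ antidiagonalTuple 1 p.2, F (Fin.cons p.1 x) :=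
  tuple_split 1 m F

private lemma S2 (m : ℕ) :
    ∑ p ∈ antidiagonal m, (catalan p.1 : ℤ) * catalan p.2 = catalan (m+1) := by
  rw [catalan_succ' m]
  push_cast
  rfl

private lemma E1 (m : ℕ) :
    ∑ p ∈ antidiagonal m, (catalan p.1 : ℤ) * catalan (p.2+1)
      = catalan (m+2) - catalan (m+1) := by
  have h := S2 (m+1)
  rw [antidiagonal_succ', Finset.sum_cons, Finset.sum_map] at h
  simp only [Function.Embedding.coe_prodMap, Function.Embedding.coeFn_mk,
    Function.Embedding.refl_apply, Prod.map, Nat.succ_eq_add_one, catalan_zero,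
    Nat.cast_one, mul_one] at h
  norm_num at h
  linarith

private lemma E2 (m : ℕ) :
    ∑ p ∈ antidiagonal m, (catalan p.1 : ℤ) * catalan (p.2+2)
      = catalan (m+3) - catalan (m+2) - catalan (m+1) := by
  have h := E1 (m+1)
  rw [antidiagonal_succ', Finset.sum_cons, Finset.sum_map] at h
  simp only [Function.Embedding.coe_prodMap, Function.Embedding.coeFn_mk,
    Function.Embedding.refl_apply, Prod.map, Nat.succ_eq_add_one, catalan_one,
    Nat.cast_one, mul_one] at h
  norm_num at h
  linarith

private lemma sum_if_snd_zero (m : ℕ) (f : ℕ × ℕ → ℤ) :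
    ∑ p ∈ antidiagonal m, (if p.2 = 0 then f p else 0) = f (m, 0) := by
  rw [Finset.sum_eq_single (m, 0)]
  · simp
  · rintro ⟨a, b⟩ hb hne
    rw [HasAntidiagonal.mem_antidiagonal] at hb
    have : ¬ b = 0 := fun h => hne (by simp [h] at hb ⊢; omega)
    simp [this]
  · intro h
    exact absurd (by simp) h

private lemma sum_if_fst_zero (m : ℕ) (f : ℕ × ℕ → ℤ) :
    ∑ p ∈ antidiagonal m, (if p.1 = 0 then f p else 0) = f (0, m) := by
  rw [Finset.sum_eq_single (0, m)]
  · simp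
  · rintro ⟨a, b⟩ hb hne
    rw [HasAntidiagonal.mem_antidiagonal] at hb
    have : ¬ a = 0 := fun h => hne (by simp [h] at hb ⊢; omega)
    simp [this]
  · intro h
    exact absurd (by simp) h

private lemma sum_if_pos_snd (m : ℕ) (f : ℕ × ℕ → ℤ) :
    ∑ p ∈ antidiagonal m, (if 1 ≤ p.2 then f p else 0)
      = (∑ p ∈ antidiagonal m, f p) - f (m, 0) := by
  rw [← sum_if_snd_zero m f, ← Finset.sum_sub_distrib]
  apply Finset.sum_congr rfl
  intro p _
  rcases Nat.eq_zero_or_pos p.2 with h | h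
  · simp [h]
  · have h1 : 1 ≤ p.2 := h
    have h2 : ¬ p.2 = 0 := by omega
    simp [h1, h2]

private lemma sum_if_pos_fst (m : ℕ) (f : ℕ × ℕ → ℤ) :
    ∑ p ∈ antidiagonal m, (if 1 ≤ p.1 then f p else 0)
      = (∑ p ∈ antidiagonal m, f p) - f (0, m) := by
  rw [← sum_if_fst_zero m f, ← Finset.sum_sub_distrib]
  apply Finset.sum_congr rfl
  intro p _
  rcases Nat.eq_zero_or_pos p.1 with h | h
  · simp [h]
  · have h1 : 1 ≤ p.1 := h
    have h2 : ¬ p.1 = 0 := by omega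
    simp [h1, h2]

private lemma innerSum (s : ℕ) :
    ∑ r ∈ antidiagonal s, (if 1 ≤ r.2 then (catalan r.1 : ℤ) * catalan r.2 else 0)
      = catalan (s+1) - catalan s := by
  rw [sum_if_pos_snd s (fun r => (catalan r.1 : ℤ) * catalan r.2), S2]
  simp

private lemma midSum (t : ℕ) :
    ∑ q ∈ antidiagonal t, (catalan q.1 : ℤ) * ((catalan (q.2+1) : ℤ) - catalan q.2)
      = catalan (t+2) - 2 * catalan (t+1) := by
  simp_rw [mul_sub]
  rw [Finset.sum_sub_distrib, E1, S2]
  ring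

private lemma outerSum (m : ℕ) :
    ∑ p ∈ antidiagonal m, (catalan p.1 : ℤ) * ((catalan (p.2+2) : ℤ) - 2 * catalan (p.2+1))
      = catalan (m+3) - 3 * catalan (m+2) + catalan (m+1) := by
  simp_rw [mul_sub, two_mul, mul_add]
  rw [Finset.sum_sub_distrib, Finset.sum_add_distrib, E1, E2]
  ring

private lemma eval4 (a b c d : ℕ) :
    (if 1 ≤ (Fin.cons a (Fin.cons b (Fin.cons c ![d])) : Fin 4 → ℕ) 0 ∧
        1 ≤ (Fin.cons a (Fin.cons b (Fin.cons c ![d])) : Fin 4 → ℕ) 3 then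
      ∏ i, (catalan ((Fin.cons a (Fin.cons b (Fin.cons c ![d])) : Fin 4 → ℕ) i) : ℤ) else 0)
    = (if 1 ≤ a then (1:ℤ) else 0) *
        ((catalan a : ℤ) * ((catalan b : ℤ) *
          (if 1 ≤ d then (catalan c : ℤ) * (catalan d : ℤ) else 0))) := by
  have h0 : (Fin.cons a (Fin.cons b (Fin.cons c ![d])) : Fin 4 → ℕ) 0 = a := rfl
  have h3 : (Fin.cons a (Fin.cons b (Fin.cons c ![d])) : Fin 4 → ℕ) 3 = d := rfl
  have hp : ∏ i, (catalan ((Fin.cons a (Fin.cons b (Fin.cons c ![d])) : Fin 4 → ℕ) i) : ℤ)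
      = (catalan a : ℤ) * catalan b * catalan c * catalan d := by
    rw [Fin.prod_univ_four]
    rfl
  rw [h0, h3, hp]
  by_cases ha : 1 ≤ a <;> by_cases hd : 1 ≤ d <;> simp [ha, hd] <;> ring

/-- For every n ≥ 2, ∑ C_{r₁}C_{r₂}C_{r₃}C_{r₄} over quadruples with
r₁ ≥ 1, r₄ ≥ 1, r₂, r₃ ≥ 0 and r₁+r₂+r₃+r₄ = n−2 equals C_{n+1} − 4·C_n + 3·C_{n−1}. -/
theorem stmt_12 (n : ℕ) (hn : 2 ≤ n) :
    (∑ r ∈ (Finset.Nat.antidiagonalTuple 4 (n - 2)).filter (fun r => 1 ≤ r 0 ∧ 1 ≤ r 3),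
        ∏ i, (catalan (r i) : ℤ)) =
      (catalan (n + 1) : ℤ) - 4 * catalan n + 3 * catalan (n - 1) := by
  obtain ⟨m, rfl⟩ : ∃ m, n = m + 2 := ⟨n - 2, by omega⟩
  have h2 : m + 2 - 2 = m := by omega
  have h1 : m + 2 - 1 = m + 1 := by omega
  rw [h2, h1, Finset.sum_filter, split4]
  simp_rw [split3, split2, antidiagonalTuple_one, Finset.sum_singleton]
  have step1 : ∀ p ∈ antidiagonal m,
      (∑ q ∈ antidiagonal p.2, ∑ r ∈ antidiagonal q.2,
        (if 1 ≤ (Fin.cons p.1 (Fin.cons q.1 (Fin.cons r.1 ![r.2])) : Fin 4 → ℕ) 0 ∧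
            1 ≤ (Fin.cons p.1 (Fin.cons q.1 (Fin.cons r.1 ![r.2])) : Fin 4 → ℕ) 3 then
          ∏ i, (catalan ((Fin.cons p.1 (Fin.cons q.1 (Fin.cons r.1 ![r.2])) : Fin 4 → ℕ) i) : ℤ)
        else 0))
      = (if 1 ≤ p.1 then (1:ℤ) else 0) *
          ((catalan p.1 : ℤ) * ((catalan (p.2+2) : ℤ) - 2 * catalan (p.2+1))) := by
    intro p _
    have := fun (q : ℕ × ℕ) (_ : q ∈ antidiagonal p.2) => by
      calc ∑ r ∈ antidiagonal q.2,
          (if 1 ≤ (Fin.cons p.1 (Fin.cons q.1 (Fin.cons r.1 ![r.2])) : Fin 4 → ℕ) 0 ∧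
              1 ≤ (Fin.cons p.1 (Fin.cons q.1 (Fin.cons r.1 ![r.2])) : Fin 4 → ℕ) 3 then
            ∏ i, (catalan ((Fin.cons p.1 (Fin.cons q.1 (Fin.cons r.1 ![r.2])) : Fin 4 → ℕ) i) : ℤ)
          else 0)
          = ∑ r ∈ antidiagonal q.2, (if 1 ≤ p.1 then (1:ℤ) else 0) *
              ((catalan p.1 : ℤ) * ((catalan q.1 : ℤ) *
                (if 1 ≤ r.2 then (catalan r.1 : ℤ) * (catalan r.2 : ℤ) else 0))) :=
            Finset.sum_congr rfl fun r _ => eval4 p.1 q.1 r.1 r.2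
        _ = (if 1 ≤ p.1 then (1:ℤ) else 0) *
              ((catalan p.1 : ℤ) * ((catalan q.1 : ℤ) * ((catalan (q.2+1) : ℤ) - catalan q.2))) := by
            rw [← Finset.mul_sum, ← Finset.mul_sum, ← Finset.mul_sum, innerSum]
    rw [Finset.sum_congr rfl this, ← Finset.mul_sum, ← Finset.mul_sum, midSum]
  rw [Finset.sum_congr rfl step1]
  simp_rw [ite_mul, one_mul, zero_mul]
  rw [sum_if_pos_fst m
    (fun p => (catalan p.1 : ℤ) * ((catalan (p.2+2) : ℤ) - 2 * catalan (p.2+1))), outerSum]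
  simp only [catalan_zero, Nat.cast_one, one_mul]
  have e1 : m + 3 = m + 2 + 1 := by ring
  have e2 : m + 1 + 1 = m + 2 := by ring
  rw [e1]
  ring_nf
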